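/- Let K_{n,n} = G(U,V), n ≥ 3, be edge-colored with exactly k colors such that there is no rainbow K_{1,3}, and suppose some vertex u ∈ U is incident with only one color, say color 1. If additionally every vertex u' ∈ U sees at most one color different from 1, then U can be partitioned into parts U_1,…,U_k and V into parts V_1,…,V_k such that only colors 1 and i appear on edges between U_i and V_i, and every edge not inside some pair (U_i,V_i) has color 1. -/

import Mathlib

open Function Finset SimpleGraph

/-- A rainbow path on 4 vertices `u₁ v₁ u₂ v₂` (middle pattern). -/
def rbP4pat {N : ℕ} {γ : Type*} (c : Fin N → Fin N → γ) : Prop :=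
  ∃ u₁ u₂ v₁ v₂ : Fin N, u₁ ≠ u₂ ∧ v₁ ≠ v₂ ∧
    c u₁ v₁ ≠ c u₂ v₁ ∧ c u₁ v₁ ≠ c u₂ v₂ ∧ c u₂ v₁ ≠ c u₂ v₂

/-- The coloring `c` of `K_{N,N}` contains a rainbow path on 4 vertices. -/
def hasRainbowP4 {N : ℕ} {γ : Type*} (c : Fin N → Fin N → γ) : Prop :=
  rbP4pat c ∨ rbP4pat (fun v u => c u v)

/-- A rainbow path on 5 vertices `u₁ v₁ u₂ v₂ u₃` (one-sided pattern). -/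
def rbP5pat {N : ℕ} {γ : Type*} (c : Fin N → Fin N → γ) : Prop :=
  ∃ u₁ u₂ u₃ v₁ v₂ : Fin N, u₁ ≠ u₂ ∧ u₁ ≠ u₃ ∧ u₂ ≠ u₃ ∧ v₁ ≠ v₂ ∧
    c u₁ v₁ ≠ c u₂ v₁ ∧ c u₁ v₁ ≠ c u₂ v₂ ∧ c u₁ v₁ ≠ c u₃ v₂ ∧
    c u₂ v₁ ≠ c u₂ v₂ ∧ c u₂ v₁ ≠ c u₃ v₂ ∧ c u₂ v₂ ≠ c u₃ v₂

/-- The coloring `c` of `K_{N,N}` contains a rainbow path on 5 vertices. -/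
def hasRainbowP5 {N : ℕ} {γ : Type*} (c : Fin N → Fin N → γ) : Prop :=
  rbP5pat c ∨ rbP5pat (fun v u => c u v)

/-- The coloring `c` of `K_{N,N}` contains a rainbow star `K_{1,3}`:
some vertex (on either side) has three incident edges with pairwise distinct colors. -/
def hasRainbowK13 {N : ℕ} {γ : Type*} (c : Fin N → Fin N → γ) : Prop :=
  (∃ u v₁ v₂ v₃ : Fin N, c u v₁ ≠ c u v₂ ∧ c u v₁ ≠ c u v₃ ∧ c u v₂ ≠ c u v₃) ∨
  (∃ v u₁ u₂ u₃ : Fin N, c u₁ v ≠ c u₂ v ∧ c u₁ v ≠ c u₃ v ∧ c u₂ v ≠ c u₃ v)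

/-- The coloring `c` of `K_{N,N}` (first coordinate: side `U`, second: side `V`)
contains a monochromatic copy of the (bipartite) graph `H`. -/
def hasMonoCopy {N : ℕ} {γ : Type*} {α : Type*} (c : Fin N → Fin N → γ)
    (H : SimpleGraph α) : Prop :=
  ∃ i : γ, ∃ f : α → Fin N ⊕ Fin N, Function.Injective f ∧
    ∀ a b, H.Adj a b → ∃ u v : Fin N, c u v = i ∧
      ((f a = Sum.inl u ∧ f b = Sum.inr v) ∨ (f a = Sum.inr v ∧ f b = Sum.inl u))

/-- The coloring `c` of `K_{N,N}` contains a monochromatic copy of `K_{s,t}`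
(in either orientation with respect to the two sides). -/
def hasMonoKst {N : ℕ} {γ : Type*} (c : Fin N → Fin N → γ) (s t : ℕ) : Prop :=
  ∃ i : γ, ∃ S T : Finset (Fin N),
    ((S.card = s ∧ T.card = t) ∨ (S.card = t ∧ T.card = s)) ∧
    ∀ u ∈ S, ∀ v ∈ T, c u v = i

/-- Disjoint union of a family of graphs, on the sigma type. -/
def sigmaUnion {ι : Type*} {β : ι → Type*} (G : ∀ i, SimpleGraph (β i)) :
    SimpleGraph (Σ i, β i) where
  Adj x y := ∃ i a b, (G i).Adj a b ∧ x = ⟨i, a⟩ ∧ y = ⟨i, b⟩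
  symm := by constructor; rintro x y ⟨i, a, b, h, rfl, rfl⟩; exact ⟨i, b, a, h.symm, rfl, rfl⟩
  loopless := by
    constructor
    rintro x ⟨i, a, b, h, rfl, h2⟩
    obtain rfl : a = b := by simpa using h2
    exact h.ne rfl


/-- exactly `k` colors (labeled `1,…,k`), no rainbow `K_{1,3}`, some
vertex `u ∈ U` sees only color 1, and every vertex of `U` sees at most one color
different from 1.  Then there are partitions `U_1,…,U_k` of `U` and `V_1,…,V_k` of `V`
(given by part-index functions `pU, pV`) such that only colors `1` and `i` appear on
edges between `U_i` and `V_i`, and every other edge has color 1. -/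
theorem stmt3 (n k : ℕ) (hn : 3 ≤ n) (c : Fin n → Fin n → ℕ)
    (hcolors : (Finset.univ ×ˢ Finset.univ).image (fun p : Fin n × Fin n => c p.1 p.2)
      = Finset.Icc 1 k)
    (h : ¬ hasRainbowK13 c)
    (u : Fin n) (hu : Finset.univ.image (fun v => c u v) = ({1} : Finset ℕ))
    (hrest : ∀ u' : Fin n, ((Finset.univ.image (fun v => c u' v)) \ ({1} : Finset ℕ)).card ≤ 1) :
    ∃ pU pV : Fin n → ℕ,
      (∀ x, pU x ∈ Finset.Icc 1 k) ∧ (∀ y, pV y ∈ Finset.Icc 1 k) ∧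
      (∀ x y : Fin n,
        (pU x = pV y → (c x y = 1 ∨ c x y = pU x)) ∧
        (pU x ≠ pV y → c x y = 1)) := by
  classical
  have hu1 : ∀ v, c u v = 1 := by
    intro v
    have : c u v ∈ Finset.univ.image (fun v => c u v) :=
      Finset.mem_image_of_mem _ (Finset.mem_univ v)
    rw [hu] at this; simpa using this
  have hmem : ∀ x y, c x y ∈ Finset.Icc 1 k := by
    intro x y
    rw [← hcolors]
    exact Finset.mem_image.2 ⟨(x, y), by simp, rfl⟩
  have uniqU : ∀ x v₁ v₂, c x v₁ ≠ 1 → c x v₂ ≠ 1 → c x v₁ = c x v₂ := by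
    intro x v₁ v₂ h1 h2
    have hc := Finset.card_le_one.1 (hrest x)
    refine hc _ ?_ _ ?_ <;> simp only [Finset.mem_sdiff, Finset.mem_image,
      Finset.mem_singleton, Finset.mem_univ]
    · exact ⟨⟨v₁, trivial, rfl⟩, h1⟩
    · exact ⟨⟨v₂, trivial, rfl⟩, h2⟩
  have uniqV : ∀ y x₁ x₂, c x₁ y ≠ 1 → c x₂ y ≠ 1 → c x₁ y = c x₂ y := by
    intro y x₁ x₂ h1 h2
    by_contra hne
    exact h (Or.inr ⟨y, u, x₁, x₂, by rw [hu1]; exact fun e => h1 e.symm,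
      by rw [hu1]; exact fun e => h2 e.symm, hne⟩)
  set pU : Fin n → ℕ := fun x => if hx : ∃ v, c x v ≠ 1 then c x hx.choose else 1 with hpU
  set pV : Fin n → ℕ := fun y => if hy : ∃ x, c x y ≠ 1 then c hy.choose y else 1 with hpV
  have hUval : ∀ x y, c x y ≠ 1 → pU x = c x y := by
    intro x y hxy
    have hx : ∃ v, c x v ≠ 1 := ⟨y, hxy⟩
    simp only [hpU, dif_pos hx]
    exact uniqU x _ y hx.choose_spec hxy
  have hVval : ∀ x y, c x y ≠ 1 → pV y = c x y := by
    intro x y hxy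
    have hy : ∃ x, c x y ≠ 1 := ⟨x, hxy⟩
    simp only [hpV, dif_pos hy]
    exact uniqV y _ x hy.choose_spec hxy
  have h1k : (1 : ℕ) ∈ Finset.Icc 1 k := by
    have := hmem u u; rwa [hu1] at this
  refine ⟨pU, pV, ?_, ?_, ?_⟩
  · intro x
    by_cases hx : ∃ v, c x v ≠ 1
    · simp only [hpU, dif_pos hx]; exact hmem _ _
    · simp only [hpU, dif_neg hx]; exact h1k
  · intro y
    by_cases hy : ∃ x, c x y ≠ 1
    · simp only [hpV, dif_pos hy]; exact hmem _ _
    · simp only [hpV, dif_neg hy]; exact h1k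
  · intro x y
    constructor
    · intro _
      by_cases hxy : c x y = 1
      · exact Or.inl hxy
      · exact Or.inr (hUval x y hxy).symm
    · intro hne
      by_contra hxy
      exact hne ((hUval x y hxy).trans (hVval x y hxy).symm)
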